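/- Let q ≥ 3 be an integer and let M, m > 0 satisfy m/M = tan²(π/q). Define J(V, v) = Re( (V + i·tan(π/q)·v)^q ) (real part of the q-th power of the complex number V + i·tan(π/q)·v). Then J is conserved by both collision maps: J(V', v') = J(V, v) whenever (V', v') is the elastic ball-ball collision image of (V, v), and J(V, −v) = J(V, v) (ball-wall collision). -/

import Mathlib

/-- For superintegrable mass ratios `m/M = tan²(π/q)` with integer `q ≥ 3`, the
Chevalley invariant `J(V, v) = Re((V + i·tan(π/q)·v)^q)` is conserved by both
the elastic ball-ball collision map and the ball-wall collision map. -/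
theorem galperin_superintegrable_invariant_conserved
    (q : ℕ) (hq : 3 ≤ q) (M m : ℝ) (hM : 0 < M) (hm : 0 < m)
    (hratio : m / M = Real.tan (Real.pi / q) ^ 2) :
    (∀ V v V' v' : ℝ,
      V' = ((M - m) * V + 2 * m * v) / (M + m) →
      v' = (2 * M * V + (m - M) * v) / (M + m) →
      (((V' : ℂ) + Complex.I * (Real.tan (Real.pi / q) : ℝ) * (v' : ℂ)) ^ q).re
        = (((V : ℂ) + Complex.I * (Real.tan (Real.pi / q) : ℝ) * (v : ℂ)) ^ q).re) ∧
    (∀ V v : ℝ,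
      (((V : ℂ) + Complex.I * (Real.tan (Real.pi / q) : ℝ) * ((-v : ℝ) : ℂ)) ^ q).re
        = (((V : ℂ) + Complex.I * (Real.tan (Real.pi / q) : ℝ) * (v : ℂ)) ^ q).re) := by
  set α : ℝ := Real.pi / q with hα
  set t : ℝ := Real.tan α with htdef
  have hq0 : (0 : ℝ) < (q : ℝ) := by
    have : (0 : ℕ) < q := by omega
    exact_mod_cast this
  have hαpos : 0 < α := div_pos Real.pi_pos hq0
  have hαlt : α < Real.pi / 2 := by
    have h3 : (3 : ℝ) ≤ (q : ℝ) := by exact_mod_cast hq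
    have : Real.pi / q ≤ Real.pi / 3 :=
      div_le_div_of_nonneg_left Real.pi_pos.le (by norm_num) h3
    calc α ≤ Real.pi / 3 := this
      _ < Real.pi / 2 := by
        have := Real.pi_pos
        linarith
  have hc : 0 < Real.cos α :=
    Real.cos_pos_of_mem_Ioo ⟨by linarith, hαlt⟩
  have hcne : Real.cos α ≠ 0 := ne_of_gt hc
  have ht : t = Real.sin α / Real.cos α := Real.tan_eq_sin_div_cos α
  have hsc : Real.sin α ^ 2 + Real.cos α ^ 2 = 1 := Real.sin_sq_add_cos_sq α
  have hm' : m = M * t ^ 2 := by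
    field_simp at hratio
    linarith [hratio]
  have h1t : (0 : ℝ) < 1 + t ^ 2 := by positivity
  have h1tne : (1 : ℝ) + t ^ 2 ≠ 0 := ne_of_gt h1t
  have hcos2 : Real.cos (2 * α) = (1 - t ^ 2) / (1 + t ^ 2) := by
    rw [Real.cos_two_mul', ht]
    field_simp
    linear_combination (Real.cos α ^ 2 - Real.sin α ^ 2) * hsc
  have hsin2 : Real.sin (2 * α) = 2 * t / (1 + t ^ 2) := by
    rw [Real.sin_two_mul, ht]
    field_simp
    linear_combination (Real.sin α) * hsc
  -- the rotation
  set ω : ℂ := Complex.exp ((2 * α : ℝ) * Complex.I) with hω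
  have hωq : ω ^ q = 1 := by
    rw [hω, ← Complex.exp_nat_mul]
    have hqc : (q : ℂ) ≠ 0 := by exact_mod_cast hq0.ne'
    have : (q : ℂ) * ((2 * α : ℝ) * Complex.I) = 2 * Real.pi * Complex.I := by
      push_cast [hα]
      field_simp
    rw [this, Complex.exp_two_pi_mul_I]
  have hωval : ω = (((1 - t ^ 2) / (1 + t ^ 2) : ℝ) : ℂ)
      + ((2 * t / (1 + t ^ 2) : ℝ) : ℂ) * Complex.I := by
    rw [hω, Complex.exp_mul_I, ← Complex.ofReal_cos, ← Complex.ofReal_sin,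
      hcos2, hsin2]
  have h1tC : (1 : ℂ) + (t : ℂ) ^ 2 ≠ 0 := by
    exact_mod_cast (Complex.ofReal_ne_zero.mpr h1tne)
  have hMC : (M : ℂ) ≠ 0 := Complex.ofReal_ne_zero.mpr hM.ne'
  have hMMC : (M : ℂ) + (M : ℂ) * (t : ℂ) ^ 2 ≠ 0 := by
    have : (M : ℂ) + (M : ℂ) * (t : ℂ) ^ 2 = (M : ℂ) * (1 + (t : ℂ) ^ 2) := by ring
    rw [this]
    exact mul_ne_zero hMC h1tC
  have key : ∀ V v : ℝ,
      ((((M - m) * V + 2 * m * v) / (M + m) : ℝ) : ℂ)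
        + Complex.I * (t : ℂ) * (((2 * M * V + (m - M) * v) / (M + m) : ℝ) : ℂ)
      = ω * (starRingEnd ℂ) ((V : ℂ) + Complex.I * (t : ℂ) * (v : ℂ)) := by
    intro V v
    rw [hωval, hm']
    simp only [map_add, map_mul, Complex.conj_I, Complex.conj_ofReal]
    push_cast
    field_simp [hMMC]
    ring_nf
    simp [Complex.I_sq]
  constructor
  · intro V v V' v' hV' hv'
    subst hV' hv'
    rw [key V v, mul_pow, hωq, one_mul, ← map_pow, Complex.conj_re]
  · intro V v
    have : ((V : ℂ) + Complex.I * (t : ℝ) * ((-v : ℝ) : ℂ))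
        = (starRingEnd ℂ) ((V : ℂ) + Complex.I * (t : ℝ) * (v : ℂ)) := by
      simp [Complex.ext_iff]
    rw [this, ← map_pow, Complex.conj_re]
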